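/- For m ≥ 3 and n ≥ 2, the upper domination number of K_m □ K_{1,n} equals m + n − 2. -/

import Mathlib

open SimpleGraph

variable {V : Type*} {W : Type*}

/-- `D` is a dominating set of `G`: every vertex outside `D` has a neighbor in `D`. -/
def IsDomSet (G : SimpleGraph V) (D : Set V) : Prop :=
  ∀ v ∉ D, ∃ u ∈ D, G.Adj u v

/-- `D` is a minimal dominating set: dominating, and no proper subset is dominating. -/
def IsMinDomSet (G : SimpleGraph V) (D : Set V) : Prop :=
  IsDomSet G D ∧ ∀ D' ⊂ D, ¬ IsDomSet G D'

/-- The upper domination number `Γ(G)`: maximum size of a minimal dominating set. -/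
noncomputable def upperDom (G : SimpleGraph V) : ℕ :=
  sSup {n | ∃ D : Set V, IsMinDomSet G D ∧ D.ncard = n}

/-- The domination number `γ(G)`: minimum size of a dominating set. -/
noncomputable def domNum (G : SimpleGraph V) : ℕ :=
  sInf {n | ∃ D : Set V, IsDomSet G D ∧ D.ncard = n}

/-- The set of vertices of `D` having a private `D`-neighbor. -/
def privSet (G : SimpleGraph V) (D : Set V) : Set V :=
  {v ∈ D | ∃ u, u ∉ D ∧ G.Adj v u ∧ ∀ w ∈ D, G.Adj w u → w = v}

/-- `I` is an independent set of `G`. -/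
def IsIndep (G : SimpleGraph V) (I : Set V) : Prop :=
  ∀ u ∈ I, ∀ v ∈ I, ¬ G.Adj u v

/-- `I` is a maximal independent set of `G`. -/
def IsMaxIndep (G : SimpleGraph V) (I : Set V) : Prop :=
  IsIndep G I ∧ ∀ J, IsIndep G J → I ⊆ J → J = I

/-- The independence number `α(G)`. -/
noncomputable def indepNum (G : SimpleGraph V) : ℕ :=
  sSup {n | ∃ I : Set V, IsIndep G I ∧ I.ncard = n}

/-- The star `K_{1,n}` on `Fin (n+1)` with center `0`. -/
def starGraph (n : ℕ) : SimpleGraph (Fin (n + 1)) :=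
  SimpleGraph.fromRel (fun i _ => i = 0)

/-- The graph `X_n`: two copies of `K_{n+1}` (on `u_0,…,u_n` and `v_0,…,v_n`)
joined by the matching edges `u_i v_i` for `i ≠ 0`. -/
def Xgraph (n : ℕ) : SimpleGraph (Fin (n + 1) ⊕ Fin (n + 1)) :=
  SimpleGraph.fromRel (fun x y => match x, y with
    | .inl _, .inl _ => True
    | .inr _, .inr _ => True
    | .inl i, .inr j => i = j ∧ i ≠ 0
    | _, _ => False)

/-- The graph `X_n'`: `X_n` with `u_0` deleted.  Vertices `inl i` represent
`u_{i+1}` (`i : Fin n`) and `inr j` represent `v_j` (`j : Fin (n+1)`); each side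
induces a complete graph and `u_{i+1}` is matched to `v_{i+1}`. -/
def Xgraph' (n : ℕ) : SimpleGraph (Fin n ⊕ Fin (n + 1)) :=
  SimpleGraph.fromRel (fun x y => match x, y with
    | .inl _, .inl _ => True
    | .inr _, .inr _ => True
    | .inl i, .inr j => (j : ℕ) = (i : ℕ) + 1
    | _, _ => False)

lemma minDom_priv {V : Type*} {G : SimpleGraph V} {D : Set V} (h : IsMinDomSet G D) :
    ∀ v ∈ D, (∀ u ∈ D, ¬ G.Adj u v) ∨ (∃ u, u ∉ D ∧ G.Adj v u ∧ ∀ w ∈ D, G.Adj w u → w = v) := by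
  intro v hv
  have hsub : D \ {v} ⊂ D := Set.sdiff_singleton_ssubset.mpr hv
  have hnd := h.2 _ hsub
  unfold IsDomSet at hnd
  push_neg at hnd
  obtain ⟨w, hw1, hw2⟩ := hnd
  by_cases hwv : w = v
  · left; intro u hu hadj
    subst hwv
    exact hw2 u ⟨hu, fun he => (G.irrefl (Set.mem_singleton_iff.mp he ▸ hadj))⟩ hadj
  · right
    have hwD : w ∉ D := fun hwD => hw1 ⟨hwD, by simpa using hwv⟩
    obtain ⟨u, hu, hadj⟩ := h.1 w hwD
    have huv : u = v := by
      by_contra hne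
      exact hw2 u ⟨hu, by simpa using hne⟩ hadj
    subst huv
    exact ⟨w, hwD, hadj, fun x hx hax => by
      by_contra hne; exact hw2 x ⟨hx, by simpa using hne⟩ hax⟩

lemma G_adj {m n : ℕ} {x y : Fin m × Fin (n+1)} :
    ((⊤ : SimpleGraph (Fin m)).boxProd (_root_.starGraph n)).Adj x y ↔
      (x.1 ≠ y.1 ∧ x.2 = y.2) ∨ (x.1 = y.1 ∧ x.2 ≠ y.2 ∧ (x.2 = 0 ∨ y.2 = 0)) := by
  simp [boxProd_adj, _root_.starGraph, fromRel_adj, top_adj]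
  tauto

section
variable {m n : ℕ} {D : Set (Fin m × Fin (n+1))}
  (hD : IsMinDomSet ((⊤ : SimpleGraph (Fin m)).boxProd (_root_.starGraph n)) D)

include hD

/-- L1: a vertex of `D` in a row `j ≠ 0` with a companion in its row forces
row 0 empty and an exclusive column. -/
lemma L1 {v : Fin m × Fin (n+1)} (hv : v ∈ D) (hv0 : v.2 ≠ 0)
    (hcomp : ∃ w ∈ D, w ≠ v ∧ w.2 = v.2) :
    (∀ w ∈ D, w.2 ≠ (0 : Fin (n+1))) ∧ (∀ w ∈ D, w.1 = v.1 → w = v) := by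
  obtain ⟨w0, hw0D, hw0ne, hw0row⟩ := hcomp
  have hw0col : w0.1 ≠ v.1 := fun h => hw0ne (Prod.ext_iff.mpr ⟨h, hw0row⟩)
  rcases minDom_priv hD v hv with hiso | ⟨u, huD, hadj, hpriv⟩
  · exact absurd (G_adj.mpr (Or.inl ⟨hw0col, hw0row⟩)) (hiso w0 hw0D)
  · rcases G_adj.mp hadj with ⟨hne, heq⟩ | ⟨heq, hne, h0⟩
    · -- u in same row: contradiction via w0
      exfalso
      have hw0u : w0.1 ≠ u.1 := by
        intro h
        have huw : u = w0 := Prod.ext_iff.mpr ⟨h.symm, heq.symm.trans hw0row.symm⟩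
        exact huD (huw ▸ hw0D)
      have := hpriv w0 hw0D (G_adj.mpr (Or.inl ⟨hw0u, hw0row.trans heq⟩))
      exact hw0ne this
    · -- u = (v.1, 0)
      have hu2 : u.2 = 0 := h0.resolve_left hv0
      constructor
      · intro w hw hw2
        by_cases hwu : w.1 = u.1
        · exact huD (by rwa [show w = u from Prod.ext_iff.mpr ⟨hwu, hw2.trans hu2.symm⟩] at hw)
        · have := hpriv w hw (G_adj.mpr (Or.inl ⟨hwu, hw2.trans hu2.symm⟩))
          exact hv0 (by rw [← this]; exact hw2)
      · intro w hw hwcol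
        by_cases hw2 : w.2 = 0
        · exfalso
          by_cases hwu : w.1 = u.1
          · exact huD (by rwa [show w = u from Prod.ext_iff.mpr ⟨hwu, hw2.trans hu2.symm⟩] at hw)
          · have := hpriv w hw (G_adj.mpr (Or.inl ⟨hwu, hw2.trans hu2.symm⟩))
            exact hv0 (by rw [← this]; exact hw2)
        · exact hpriv w hw (G_adj.mpr (Or.inr ⟨hwcol.trans heq, by rw [hu2]; exact hw2, Or.inr hu2⟩))

/-- L2: a vertex of `D` in row 0 with a companion in row 0 forces an empty row. -/
lemma L2 {v : Fin m × Fin (n+1)} (hv : v ∈ D) (hv0 : v.2 = 0)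
    (hcomp : ∃ w ∈ D, w ≠ v ∧ w.2 = (0 : Fin (n+1))) :
    ∃ j : Fin (n+1), j ≠ 0 ∧ ∀ w ∈ D, w.2 ≠ j := by
  obtain ⟨w0, hw0D, hw0ne, hw0row⟩ := hcomp
  have hw0col : w0.1 ≠ v.1 := fun h => hw0ne (Prod.ext_iff.mpr ⟨h, hw0row.trans hv0.symm⟩)
  rcases minDom_priv hD v hv with hiso | ⟨u, huD, hadj, hpriv⟩
  · exact absurd (G_adj.mpr (Or.inl ⟨hw0col, hw0row.trans hv0.symm⟩)) (hiso w0 hw0D)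
  · rcases G_adj.mp hadj with ⟨hne, heq⟩ | ⟨heq, hne, h0⟩
    · exfalso
      have hw0u : w0.1 ≠ u.1 := by
        intro h
        have huw : u = w0 := Prod.ext_iff.mpr ⟨h.symm, heq.symm.trans (hv0.trans hw0row.symm)⟩
        exact huD (huw ▸ hw0D)
      exact hw0ne (hpriv w0 hw0D (G_adj.mpr (Or.inl ⟨hw0u, hw0row.trans (hv0.symm.trans heq)⟩)))
    · have hu2 : u.2 ≠ 0 := fun h => hne (hv0.trans h.symm)
      refine ⟨u.2, hu2, ?_⟩
      intro w hw hw2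
      by_cases hwu : w.1 = u.1
      · exact huD (by rwa [show w = u from Prod.ext_iff.mpr ⟨hwu, hw2⟩] at hw)
      · have := hpriv w hw (G_adj.mpr (Or.inl ⟨hwu, hw2⟩))
        exact hu2 (by rw [← hv0, ← this]; exact hw2.symm)

lemma upper_bd (hm : 3 ≤ m) (hn : 2 ≤ n) : D.ncard ≤ m + n - 2 := by
  classical
  have hfin : D.Finite := Set.toFinite D
  set F : Finset (Fin m × Fin (n+1)) := hfin.toFinset with hF
  have hmemF : ∀ v, v ∈ F ↔ v ∈ D := fun v => hfin.mem_toFinset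
  rw [Set.ncard_eq_toFinset_card D hfin, ← hF]
  set R : Fin (n+1) → Finset (Fin m × Fin (n+1)) := fun j => F.filter (fun v => v.2 = j) with hR
  have hmemR : ∀ (j) (v), v ∈ R j ↔ v ∈ D ∧ v.2 = j := by
    intro j v
    rw [hR, Finset.mem_filter, hmemF]
  have htotal : F.card = ∑ j : Fin (n+1), (R j).card :=
    Finset.card_eq_sum_card_fiberwise (fun x _ => Finset.mem_univ x.2)
  have hrowm : ∀ j, (R j).card ≤ m := by
    intro j
    have hinj : Set.InjOn (Prod.fst : Fin m × Fin (n+1) → Fin m) ↑(R j) := by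
      intro a ha b hb hab
      exact Prod.ext_iff.mpr ⟨hab,
        (((hmemR j a).mp ha).2).trans (((hmemR j b).mp hb).2).symm⟩
    calc (R j).card = ((R j).image Prod.fst).card :=
          (Finset.card_image_of_injOn hinj).symm
      _ ≤ Finset.univ.card := Finset.card_le_card (Finset.subset_univ _)
      _ = m := by rw [Finset.card_univ, Fintype.card_fin]
  have key : ∀ j ≠ (0 : Fin (n+1)), 2 ≤ (R j).card → ∀ v ∈ R j,
      (∀ w ∈ D, w.2 ≠ (0 : Fin (n+1))) ∧ (∀ w ∈ D, w.1 = v.1 → w = v) := by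
    intro j hj h2 v hv
    obtain ⟨w, hwR, hwv⟩ := Finset.exists_mem_ne h2 v
    have hvD : v ∈ D := ((hmemR j v).mp hv).1
    have hv2 : v.2 = j := ((hmemR j v).mp hv).2
    exact L1 hD hvD (by rw [hv2]; exact hj)
      ⟨w, ((hmemR j w).mp hwR).1, hwv, (((hmemR j w).mp hwR).2).trans hv2.symm⟩
  by_cases hk : 2 ≤ (R 0).card
  · -- row 0 has at least two vertices
    have hrows1 : ∀ j ≠ (0 : Fin (n+1)), (R j).card ≤ 1 := by
      intro j hj
      by_contra h
      push_neg at h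
      obtain ⟨v, hv⟩ := Finset.card_pos.mp (by omega : 0 < (R j).card)
      have hempty := (key j hj (by omega) v hv).1
      have : R 0 = ∅ := Finset.eq_empty_of_forall_notMem
        (fun x hx => hempty x ((hmemR 0 x).mp hx).1 ((hmemR 0 x).mp hx).2)
      rw [this] at hk
      simp at hk
    by_cases hk0 : (R 0).card = m
    · -- row 0 full: all other rows empty
      have hinj : Set.InjOn (Prod.fst : Fin m × Fin (n+1) → Fin m) ↑(R 0) := by
        intro a ha b hb hab
        exact Prod.ext_iff.mpr ⟨hab,
          (((hmemR 0 a).mp ha).2).trans (((hmemR 0 b).mp hb).2).symm⟩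
      have himg : (R 0).image Prod.fst = Finset.univ := by
        apply Finset.eq_univ_of_card
        rw [Finset.card_image_of_injOn hinj, hk0]
        exact (Fintype.card_fin m).symm
      have hfull : ∀ i : Fin m, ((i, (0 : Fin (n+1))) : Fin m × Fin (n+1)) ∈ D := by
        intro i
        have : i ∈ (R 0).image Prod.fst := himg ▸ Finset.mem_univ i
        obtain ⟨v, hvR, hvi⟩ := Finset.mem_image.mp this
        have hvm := (hmemR 0 v).mp hvR
        exact (Prod.ext_iff.mpr ⟨hvi, hvm.2⟩ : v = (i, 0)) ▸ hvm.1
      have hempty : ∀ j ≠ (0 : Fin (n+1)), R j = ∅ := by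
        intro j hj
        apply Finset.eq_empty_of_forall_notMem
        intro v hv
        have hvD : v ∈ D := ((hmemR j v).mp hv).1
        have hv2 : v.2 = j := ((hmemR j v).mp hv).2
        have hv20 : v.2 ≠ 0 := by rw [hv2]; exact hj
        rcases minDom_priv hD v hvD with hiso | ⟨u, huD, hadj, hpriv⟩
        · exact hiso _ (hfull v.1)
            (G_adj.mpr (Or.inr ⟨rfl, fun h => hv20 h.symm, Or.inl rfl⟩))
        · rcases G_adj.mp hadj with ⟨hne, heq⟩ | ⟨heq, hne, h0⟩
          · have hu20 : (0 : Fin (n+1)) ≠ u.2 := fun h => hv20 (heq.trans h.symm)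
            have := hpriv _ (hfull u.1)
              (G_adj.mpr (Or.inr ⟨rfl, hu20, Or.inl rfl⟩))
            exact hv20 (by rw [← this])
          · have hu2 : u.2 = 0 := h0.resolve_left hv20
            exact huD ((Prod.ext_iff.mpr ⟨heq.symm, hu2⟩ : u = (v.1, 0)) ▸ hfull v.1)
      have hsum : ∑ j : Fin (n+1), (R j).card = (R 0).card := by
        apply Finset.sum_eq_single
        · intro j _ hj
          rw [hempty j hj, Finset.card_empty]
        · intro h
          exact absurd (Finset.mem_univ _) h
      rw [htotal, hsum, hk0]
      omega
    · -- 2 ≤ (R 0).card ≤ m - 1 : empty row exists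
      have hkm : (R 0).card ≤ m - 1 := by have := hrowm 0; omega
      obtain ⟨v, hv, w, hw, hvw⟩ := Finset.one_lt_card.mp hk
      obtain ⟨j0, hj0, hj0e⟩ := L2 hD ((hmemR 0 v).mp hv).1 ((hmemR 0 v).mp hv).2
        ⟨w, ((hmemR 0 w).mp hw).1, hvw.symm, ((hmemR 0 w).mp hw).2⟩
      have hRj0 : (R j0).card = 0 := by
        rw [Finset.card_eq_zero]
        exact Finset.eq_empty_of_forall_notMem
          (fun x hx => hj0e x ((hmemR j0 x).mp hx).1 ((hmemR j0 x).mp hx).2)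
      have h1 : ∑ j ∈ Finset.univ.erase 0, (R j).card + (R 0).card
          = ∑ j : Fin (n+1), (R j).card := Finset.sum_erase_add _ _ (Finset.mem_univ 0)
      have hj0mem : j0 ∈ Finset.univ.erase (0 : Fin (n+1)) :=
        Finset.mem_erase.mpr ⟨hj0, Finset.mem_univ j0⟩
      have h2 : ∑ j ∈ (Finset.univ.erase 0).erase j0, (R j).card + (R j0).card
          = ∑ j ∈ Finset.univ.erase 0, (R j).card := Finset.sum_erase_add _ _ hj0mem
      have h3 : ∑ j ∈ (Finset.univ.erase 0).erase j0, (R j).card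
          ≤ ((Finset.univ.erase 0).erase j0).card := by
        calc ∑ j ∈ (Finset.univ.erase 0).erase j0, (R j).card
            ≤ ∑ _j ∈ (Finset.univ.erase 0).erase j0, 1 :=
              Finset.sum_le_sum (fun j hj =>
                hrows1 j (Finset.mem_erase.mp (Finset.mem_erase.mp hj).2).1)
          _ = ((Finset.univ.erase 0).erase j0).card := by simp
      have hce : ((Finset.univ.erase 0).erase j0).card = n + 1 - 1 - 1 := by
        rw [Finset.card_erase_of_mem hj0mem, Finset.card_erase_of_mem (Finset.mem_univ _),
          Finset.card_univ, Fintype.card_fin]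
      rw [htotal]
      omega
  · -- row 0 has at most one vertex
    set A : Finset (Fin (n+1)) := Finset.univ.filter (fun j => 2 ≤ (R j).card) with hA
    have hmemA : ∀ j, j ∈ A ↔ 2 ≤ (R j).card := by
      intro j; rw [hA, Finset.mem_filter]; simp
    have h0A : (0 : Fin (n+1)) ∉ A := fun h => hk ((hmemA 0).mp h)
    by_cases hAe : A = ∅
    · have hall : ∀ j, (R j).card ≤ 1 := by
        intro j
        by_contra h
        push_neg at h
        have : j ∈ A := (hmemA j).mpr (by omega)
        rw [hAe] at this
        simp at this
      calc F.card = ∑ j : Fin (n+1), (R j).card := htotal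
        _ ≤ ∑ _j : Fin (n+1), 1 := Finset.sum_le_sum (fun j _ => hall j)
        _ = n + 1 := by simp
        _ ≤ m + n - 2 := by omega
    · obtain ⟨js, hjs⟩ := Finset.nonempty_iff_ne_empty.mpr hAe
      have hjs2 : 2 ≤ (R js).card := (hmemA js).mp hjs
      have hjs0 : js ≠ 0 := fun h => hk (h ▸ hjs2)
      obtain ⟨vs, hvs⟩ := Finset.card_pos.mp (by omega : 0 < (R js).card)
      have hrow0 : ∀ w ∈ D, w.2 ≠ (0 : Fin (n+1)) := (key js hjs0 hjs2 vs hvs).1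
      set M : Finset (Fin m × Fin (n+1)) := F.filter (fun v => 2 ≤ (R v.2).card) with hM
      have hmemM : ∀ v, v ∈ M ↔ v ∈ D ∧ 2 ≤ (R v.2).card := by
        intro v; rw [hM, Finset.mem_filter, hmemF]
      have hMexcl : ∀ v ∈ M, ∀ w ∈ D, w.1 = v.1 → w = v := by
        intro v hv w hw hw1
        obtain ⟨hvD, hv2⟩ := (hmemM v).mp hv
        exact (key v.2 (hrow0 v hvD) hv2 v ((hmemR _ v).mpr ⟨hvD, rfl⟩)).2 w hw hw1
      have hMinj : Set.InjOn (Prod.fst : Fin m × Fin (n+1) → Fin m) ↑M := by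
        intro a ha b hb hab
        exact hMexcl b hb a ((hmemM a).mp ha).1 hab
      have hMcard : M.card ≤ m := by
        calc M.card = (M.image Prod.fst).card := (Finset.card_image_of_injOn hMinj).symm
          _ ≤ Finset.univ.card := Finset.card_le_card (Finset.subset_univ _)
          _ = m := by rw [Finset.card_univ, Fintype.card_fin]
      by_cases hMm : M.card = m
      · have himg : M.image Prod.fst = Finset.univ := by
          apply Finset.eq_univ_of_card
          rw [Finset.card_image_of_injOn hMinj, hMm]
          exact (Fintype.card_fin m).symm
        have hFM : F ⊆ M := by
          intro w hw
          have : w.1 ∈ M.image Prod.fst := himg ▸ Finset.mem_univ w.1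
          obtain ⟨v, hvM, hv1⟩ := Finset.mem_image.mp this
          have := hMexcl v hvM w ((hmemF w).mp hw) hv1.symm
          rw [this]; exact hvM
        have := Finset.card_le_card hFM
        omega
      · have hMcard' : M.card ≤ m - 1 := by omega
        have hMF : M ⊆ F := Finset.filter_subset _ _
        have hsplit : (F \ M).card + M.card = F.card :=
          Finset.card_sdiff_add_card_eq_card hMF
        have hcfib : (F \ M).card = ∑ j : Fin (n+1),
            ((F \ M).filter (fun v => v.2 = j)).card :=
          Finset.card_eq_sum_card_fiberwise (fun x _ => Finset.mem_univ x.2)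
        have hfib0 : ∀ j ∈ insert (0 : Fin (n+1)) A,
            ((F \ M).filter (fun v => v.2 = j)).card = 0 := by
          intro j hj
          rw [Finset.card_eq_zero]
          apply Finset.eq_empty_of_forall_notMem
          intro v hv
          obtain ⟨hvFM, hv2⟩ := Finset.mem_filter.mp hv
          obtain ⟨hvF, hvM⟩ := Finset.mem_sdiff.mp hvFM
          rcases Finset.mem_insert.mp hj with h | h
          · exact hrow0 v ((hmemF v).mp hvF) (by rw [hv2, h])
          · exact hvM ((hmemM v).mpr ⟨(hmemF v).mp hvF, by rw [hv2]; exact (hmemA j).mp h⟩)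
        have hsub : ∑ j ∈ Finset.univ \ insert (0 : Fin (n+1)) A,
            ((F \ M).filter (fun v => v.2 = j)).card
            = ∑ j : Fin (n+1), ((F \ M).filter (fun v => v.2 = j)).card := by
          apply Finset.sum_subset (Finset.subset_univ _)
          intro x _ hx
          apply hfib0
          by_contra hxA
          exact hx (Finset.mem_sdiff.mpr ⟨Finset.mem_univ x, hxA⟩)
        have hfib1 : ∀ j, ((F \ M).filter (fun v => v.2 = j)).card ≤ 1 := by
          intro j
          by_cases h2 : 2 ≤ (R j).card
          · rw [hfib0 j (Finset.mem_insert.mpr (Or.inr ((hmemA j).mpr h2)))]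
            omega
          · have hsubR : (F \ M).filter (fun v => v.2 = j) ⊆ R j := by
              intro v hv
              obtain ⟨hvFM, hv2⟩ := Finset.mem_filter.mp hv
              exact (hmemR j v).mpr ⟨(hmemF v).mp (Finset.mem_sdiff.mp hvFM).1, hv2⟩
            have := Finset.card_le_card hsubR
            omega
        have hbd : ∑ j ∈ Finset.univ \ insert (0 : Fin (n+1)) A,
            ((F \ M).filter (fun v => v.2 = j)).card
            ≤ (Finset.univ \ insert (0 : Fin (n+1)) A).card := by
          calc _ ≤ ∑ _j ∈ Finset.univ \ insert (0 : Fin (n+1)) A, 1 :=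
                Finset.sum_le_sum (fun j _ => hfib1 j)
            _ = _ := by simp
        have hcardA : (Finset.univ \ insert (0 : Fin (n+1)) A).card
            = (n + 1) - (A.card + 1) := by
          rw [Finset.card_sdiff_of_subset (Finset.subset_univ _), Finset.card_univ, Fintype.card_fin,
            Finset.card_insert_of_notMem h0A]
        have hA1 : 1 ≤ A.card := Finset.card_pos.mpr ⟨js, hjs⟩
        have hAub : A.card ≤ n + 1 := by
          calc A.card ≤ Finset.univ.card := Finset.card_le_card (Finset.subset_univ _)
            _ = n + 1 := by rw [Finset.card_univ, Fintype.card_fin]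
        omega
end

lemma lower_bd {m n : ℕ} (hm : 3 ≤ m) (hn : 2 ≤ n) :
    ∃ D : Set (Fin m × Fin (n+1)),
      IsMinDomSet ((⊤ : SimpleGraph (Fin m)).boxProd (_root_.starGraph n)) D ∧
      D.ncard = m + n - 2 := by
  classical
  obtain ⟨a, rfl⟩ : ∃ a, m = a + 3 := ⟨m - 3, by omega⟩
  obtain ⟨b, rfl⟩ : ∃ b, n = b + 2 := ⟨n - 2, by omega⟩
  set o1 : Fin (b + 2 + 1) := ⟨1, by omega⟩ with ho1
  set c2 : Fin (b + 2 + 1) := ⟨2, by omega⟩ with hc2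
  set i1 : Fin (a + 3) := ⟨1, by omega⟩ with hi1
  have ho10 : o1 ≠ 0 := by simp [ho1, Fin.ext_iff]
  have hc20 : c2 ≠ 0 := by simp [hc2, Fin.ext_iff]
  have hc21 : c2 ≠ o1 := by simp [hc2, ho1, Fin.ext_iff]
  have hi10 : i1 ≠ 0 := by simp [hi1, Fin.ext_iff]
  set DF : Finset (Fin (a+3) × Fin (b+2+1)) :=
    {(0 : Fin (a+3))} ×ˢ ({0, o1} : Finset (Fin (b+2+1)))ᶜ ∪
    ({(0 : Fin (a+3))} : Finset (Fin (a+3)))ᶜ ×ˢ {o1} with hDF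
  refine ⟨↑DF, ?_, ?_⟩
  · have hmem : ∀ v : Fin (a+3) × Fin (b+2+1), v ∈ (↑DF : Set _) ↔
        ((v.1 = 0 ∧ v.2 ≠ 0 ∧ v.2 ≠ o1) ∨ (v.1 ≠ 0 ∧ v.2 = o1)) := by
      intro v
      rw [hDF]
      simp only [Finset.mem_coe, Finset.mem_union, Finset.mem_product, Finset.mem_compl,
        Finset.mem_insert, Finset.mem_singleton]
      push_neg
      tauto
    constructor
    · -- dominating
      intro v hv
      rw [hmem] at hv
      push_neg at hv
      by_cases h2 : v.2 = o1
      · have h1 : v.1 = 0 := by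
          by_contra h1
          exact (hv.2 h1) h2
        refine ⟨(i1, o1), (hmem _).mpr (Or.inr ⟨hi10, rfl⟩), G_adj.mpr (Or.inl ⟨?_, h2.symm⟩)⟩
        simp only []
        rw [h1]; exact hi10
      · by_cases h0 : v.2 = 0
        · by_cases h1 : v.1 = 0
          · refine ⟨(0, c2), (hmem _).mpr (Or.inl ⟨rfl, hc20, hc21⟩),
              G_adj.mpr (Or.inr ⟨h1.symm, ?_, Or.inr h0⟩)⟩
            rw [h0]; exact hc20
          · refine ⟨(v.1, o1), (hmem _).mpr (Or.inr ⟨h1, rfl⟩),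
              G_adj.mpr (Or.inr ⟨rfl, ?_, Or.inr h0⟩)⟩
            rw [h0]; exact ho10
        · have h1 : v.1 ≠ 0 := fun h1 => h2 (hv.1 h1 h0)
          exact ⟨(0, v.2), (hmem _).mpr (Or.inl ⟨rfl, h0, h2⟩),
            G_adj.mpr (Or.inl ⟨fun h => h1 h.symm, rfl⟩)⟩
    · -- minimal
      intro D' hss hdom
      obtain ⟨v, hvD, hvD'⟩ := Set.exists_of_ssubset hss
      rw [hmem] at hvD
      by_cases hv1 : v.1 = 0
      · have hv2 : v.2 ≠ 0 ∧ v.2 ≠ o1 := by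
          rcases hvD with h | h
          · exact h.2
          · exact absurd hv1 h.1
        obtain ⟨u, huD', hadj⟩ := hdom v hvD'
        have huD : u ∈ (↑DF : Set _) := hss.subset huD'
        rw [hmem] at huD
        rcases G_adj.mp hadj with ⟨hne, heq⟩ | ⟨heq, hne, h0⟩
        · rcases huD with h | h
          · exact hne (h.1.trans hv1.symm)
          · exact hv2.2 (heq ▸ h.2)
        · rcases h0 with h | h
          · rcases huD with hh | hh
            · exact hh.2.1 h
            · exact ho10 (h ▸ hh.2).symm
          · exact hv2.1 h
      · have hv2 : v.2 = o1 := by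
          rcases hvD with h | h
          · exact absurd h.1 hv1
          · exact h.2
        have hwD : ((v.1, (0 : Fin (b+2+1))) : Fin (a+3) × Fin (b+2+1)) ∉ (↑DF : Set _) := by
          rw [hmem]
          rintro (⟨_, h, _⟩ | ⟨_, h⟩)
          · exact h rfl
          · exact ho10 h.symm
        obtain ⟨u, huD', hadj⟩ := hdom _ (fun h => hwD (hss.subset h))
        have huD : u ∈ (↑DF : Set _) := hss.subset huD'
        have huv : u ≠ v := fun h => hvD' (h ▸ huD')
        rw [hmem] at huD
        rcases G_adj.mp hadj with ⟨hne, heq⟩ | ⟨heq, hne, h0⟩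
        · rcases huD with h | h
          · exact h.2.1 heq
          · exact ho10 ((heq.symm.trans h.2)).symm
        · rcases huD with h | h
          · exact hv1 (heq.symm.trans h.1)
          · exact huv (Prod.ext_iff.mpr ⟨heq, h.2.trans hv2.symm⟩)
  · -- cardinality
    rw [Set.ncard_coe_finset]
    rw [hDF]
    rw [Finset.card_union_of_disjoint]
    · rw [Finset.card_product, Finset.card_product, Finset.card_singleton,
        Finset.card_singleton, Finset.card_compl, Finset.card_compl]
      have h01 : ({0, o1} : Finset (Fin (b+2+1))).card = 2 := by
        rw [Finset.card_insert_of_notMem (by simpa using ho10.symm), Finset.card_singleton]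
      rw [h01, Finset.card_singleton]
      simp [Fintype.card_fin]
      omega
    · rw [Finset.disjoint_left]
      rintro ⟨x, y⟩ hx hy
      rw [Finset.mem_product] at hx hy
      have h1 : x = 0 := Finset.mem_singleton.mp hx.1
      have h2 : x ≠ 0 := by simpa using hy.1
      exact h2 h1

theorem stmt_4 (m n : ℕ) (hm : 3 ≤ m) (hn : 2 ≤ n) :
    upperDom ((⊤ : SimpleGraph (Fin m)).boxProd (_root_.starGraph n)) = m + n - 2 := by
  obtain ⟨D0, hD0, hc0⟩ := lower_bd hm hn
  apply le_antisymm
  · exact csSup_le ⟨m + n - 2, D0, hD0, hc0⟩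
      (by rintro x ⟨D, hD, rfl⟩; exact upper_bd hD hm hn)
  · exact le_csSup ⟨m + n - 2, by rintro x ⟨D, hD, rfl⟩; exact upper_bd hD hm hn⟩
      ⟨D0, hD0, hc0⟩
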